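/- Let X, Y be compact Hausdorff spaces, E, F Banach spaces over 𝕂 ∈ {ℝ, ℂ} with F strictly convex, A and B 𝕂-linear subspaces of C(X,E) and C(Y,F), respectively, where A contains all constant functions, and let T : A → B be a surjective (not necessarily linear) isometry. Then there exist a subset Y₀ of Y, a continuous surjection Φ : Y₀ → Θ(Ā), and a family {V_y}_{y∈Y₀} of real-linear operators from E to F with ‖V_y‖ = 1 such that Tf(y) = T0(y) + V_y(f(Φ(y))) for all f ∈ A and y ∈ Y₀, and moreover the map y ↦ V_y from Y₀ into the bounded operators from E to F is continuous with respect to the strong operator topology (i.e., for every u ∈ E the map y ↦ V_y(u) is continuous on Y₀). -/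

import Mathlib

open Set Metric

variable {𝕂 : Type*} [RCLike 𝕂]
variable {X : Type*} [TopologicalSpace X] [CompactSpace X] [T2Space X]
variable {Y : Type*} [TopologicalSpace Y] [CompactSpace Y] [T2Space Y]
variable {E : Type*} [NormedAddCommGroup E] [NormedSpace ℝ E] [NormedSpace 𝕂 E]
  [IsScalarTower ℝ 𝕂 E] [CompleteSpace E]
variable {F : Type*} [NormedAddCommGroup F] [NormedSpace ℝ F] [NormedSpace 𝕂 F]
  [IsScalarTower ℝ 𝕂 F] [CompleteSpace F]

/-- The set `Θ(A)` of strong boundary points of a set `A` of functions in `C(X,E)`. -/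
def strongBoundaryPoints {Z M : Type*} [TopologicalSpace Z] [CompactSpace Z]
    [NormedAddCommGroup M] (A : Set C(Z, M)) : Set Z :=
  {x | ∀ U ∈ nhds x, ∀ ε : ℝ, 0 < ε → ∀ u : M, ‖u‖ = 1 →
    ∃ f ∈ A, ‖f‖ = 1 ∧ f x = u ∧ ∀ y, y ∉ U → ‖f y‖ < ε}

set_option maxHeartbeats 1600000 in
/-- If moreover `A` contains all constant functions, then the representation of
the main theorem holds and the map `y ↦ V_y` is continuous in the strong
operator topology (i.e. `y ↦ V_y u` is continuous for every `u ∈ E`). -/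
theorem stmt11 [Nontrivial E] [StrictConvexSpace ℝ F]
    (A : Subspace 𝕂 C(X, E)) (B : Subspace 𝕂 C(Y, F))
    (hconst : ∀ u : E, ContinuousMap.const X u ∈ A)
    (T : C(X, E) → C(Y, F))
    (hmap : ∀ f ∈ A, T f ∈ B)
    (hsurj : ∀ g ∈ B, ∃ f ∈ A, T f = g)
    (hiso : ∀ f ∈ A, ∀ g ∈ A, ‖T f - T g‖ = ‖f - g‖) :
    ∃ (Y₀ : Set Y) (Φ : Y₀ → X) (V : Y₀ → (E →L[ℝ] F)),
      Continuous Φ ∧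
      (∀ y : Y₀, Φ y ∈ strongBoundaryPoints (closure (A : Set C(X, E)))) ∧
      (∀ x ∈ strongBoundaryPoints (closure (A : Set C(X, E))), ∃ y : Y₀, Φ y = x) ∧
      (∀ y : Y₀, ‖V y‖ = 1) ∧
      (∀ f ∈ A, ∀ y : Y₀, T f (y : Y) = T 0 (y : Y) + V y (f (Φ y))) ∧
      (∀ u : E, Continuous fun y : Y₀ => V y u) := by
  classical
  obtain ⟨u₀, hu₀⟩ : ∃ u : E, ‖u‖ = 1 := exists_norm_eq E zero_le_one
  -- real scalar versions of the subspaces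
  set A' : Submodule ℝ C(X, E) := A.restrictScalars ℝ with hA'
  set M : Submodule ℝ C(X, E) := A'.topologicalClosure with hM
  have hMset : (M : Set C(X, E)) = closure (A : Set C(X, E)) := by
    rw [hM, Submodule.topologicalClosure_coe]
    rfl
  have hmemM : ∀ {h : C(X, E)}, h ∈ closure (A : Set C(X, E)) → h ∈ M := by
    intro h hh
    have : h ∈ (M : Set C(X, E)) := hMset ▸ hh
    exact this
  set B' : Submodule ℝ C(Y, F) := B.restrictScalars ℝ with hB'
  have hT0 : T 0 ∈ B := hmap 0 (zero_mem A)
  -- the isometry equivalence `f ↦ T f - T 0`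
  set φ : A' → B' := fun f => ⟨T f.1 - T 0, sub_mem (hmap f.1 f.2) hT0⟩ with hφ
  have hφiso : Isometry φ := by
    refine Isometry.of_dist_eq fun f g => ?_
    have h1 := hiso f.1 f.2 g.1 g.2
    rw [Subtype.dist_eq, Subtype.dist_eq, dist_eq_norm, dist_eq_norm]
    show ‖(T f.1 - T 0) - (T g.1 - T 0)‖ = _
    rw [sub_sub_sub_cancel_right]
    exact h1
  have hφsurj : Function.Surjective φ := by
    rintro ⟨g, hg⟩
    obtain ⟨f, hf, hTf⟩ := hsurj (g + T 0) (add_mem hg hT0)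
    refine ⟨⟨f, hf⟩, Subtype.ext ?_⟩
    show T f - T 0 = g
    rw [hTf]; abel
  set e : A' ≃ᵢ B' := ⟨Equiv.ofBijective φ ⟨hφiso.injective, hφsurj⟩, hφiso⟩ with he
  have he0 : e 0 = 0 := by
    apply Subtype.ext
    show T (0 : A').1 - T 0 = 0
    simp
  set L : A' ≃ₗᵢ[ℝ] B' := e.toRealLinearIsometryEquivOfMapZero he0 with hL
  have hLe : ∀ f : A', L f = e f := fun f => by
    rw [hL, IsometryEquiv.coe_toRealLinearIsometryEquivOfMapZero]
  set S₁ : A' →L[ℝ] C(Y, F) := B'.subtypeL.comp L.toLinearIsometry.toContinuousLinearMap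
    with hS₁def
  have hS₁ : ∀ f : A', S₁ f = T f.1 - T 0 := by
    intro f
    show ((L f : B') : C(Y, F)) = T f.1 - T 0
    rw [hLe]
    rfl
  have hS₁norm : ∀ f : A', ‖S₁ f‖ = ‖f‖ := by
    intro f
    have h1 : ‖S₁ f‖ = ‖L f‖ := rfl
    rw [h1, L.norm_map]
  -- the inclusion of A' into its closure M
  have hle : A' ≤ M := Submodule.le_topologicalClosure A'
  set ι : A' →L[ℝ] M :=
    { toLinearMap := Submodule.inclusion hle
      cont := continuous_subtype_val.subtype_mk _ } with hι
  have hιiso : Isometry ι := by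
    refine Isometry.of_dist_eq fun f g => ?_
    rw [Subtype.dist_eq, Subtype.dist_eq]
    rfl
  have hιdense : DenseRange ι := by
    intro g
    rw [Metric.mem_closure_iff]
    intro ε hε
    have hg : (g : C(X, E)) ∈ closure (A' : Set C(X, E)) := by
      have h2 : (g : C(X, E)) ∈ (M : Set C(X, E)) := g.2
      rw [hMset] at h2
      exact h2
    obtain ⟨a, ha, hd⟩ := Metric.mem_closure_iff.1 hg ε hε
    exact ⟨ι ⟨a, ha⟩, Set.mem_range_self _, by rwa [Subtype.dist_eq]⟩
  -- the extension of `f ↦ T f - T 0` to the closure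
  set S : M →L[ℝ] C(Y, F) := S₁.extend ι with hS
  have hSι : ∀ f : A', S (ι f) = T f.1 - T 0 := by
    intro f
    rw [hS, ContinuousLinearMap.extend_eq (h_dense := hιdense) (h_e := hιiso.isUniformInducing)]
    exact hS₁ f
  have hSnorm : ∀ f : M, ‖S f‖ = ‖(f : C(X, E))‖ := by
    intro f
    refine hιdense.induction_on f ?_ fun a => ?_
    · exact isClosed_eq S.continuous.norm continuous_subtype_val.norm
    · rw [hSι a]
      have := hS₁norm a
      rw [hS₁ a] at this
      rw [this]
      rfl
  -- constants, as elements of M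
  have hconstM : ∀ u : E, ContinuousMap.const X u ∈ M := fun u => hle (hconst u)
  set cM : E →L[ℝ] M := LinearMap.mkContinuous
    { toFun := fun u => ⟨ContinuousMap.const X u, hconstM u⟩
      map_add' := fun u v => Subtype.ext (by ext z; simp)
      map_smul' := fun r u => Subtype.ext (by ext z; simp) } 1
    (fun u => by
      rw [one_mul]
      show ‖ContinuousMap.const X u‖ ≤ ‖u‖
      exact (ContinuousMap.norm_le _ (norm_nonneg u)).2 fun z => le_rfl) with hcM
  have hcMapp : ∀ u : E, ((cM u : M) : C(X, E)) = ContinuousMap.const X u := fun u => rfl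
  -- the operators V
  set Vf : Y → (E →L[ℝ] F) := fun y => (ContinuousMap.evalCLM ℝ y).comp (S.comp cM) with hVf
  have hVapp : ∀ y u, Vf y u = S (cM u) y := fun y u => rfl
  have hVle : ∀ y u, ‖Vf y u‖ ≤ ‖u‖ := by
    intro y u
    rw [hVapp]
    calc ‖S (cM u) y‖ ≤ ‖S (cM u)‖ := ContinuousMap.norm_coe_le_norm _ y
      _ = ‖((cM u : M) : C(X, E))‖ := hSnorm _
      _ ≤ ‖u‖ := by
          rw [hcMapp]
          exact (ContinuousMap.norm_le _ (norm_nonneg u)).2 fun z => le_rfl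
  -- the representation property
  set Rep : Y → X → Prop := fun y x =>
    x ∈ strongBoundaryPoints (closure (A : Set C(X, E))) ∧
    (∀ f : M, S f y = Vf y ((f : C(X, E)) x)) ∧ ‖Vf y u₀‖ = 1 with hRep
  -- uniqueness of the representation point
  have huniq : ∀ y x x', Rep y x → Rep y x' → x = x' := by
    rintro y x x' ⟨hxΘ, hrep, hn⟩ ⟨hx'Θ, hrep', -⟩
    by_contra hne
    obtain ⟨h, hhA, hh1, hhx, hhsm⟩ := hxΘ {x'}ᶜ
      (isOpen_compl_singleton.mem_nhds (by simpa using hne)) (1/2) one_half_pos u₀ hu₀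
    have h1 : S ⟨h, hmemM hhA⟩ y = Vf y u₀ := by rw [hrep ⟨h, hmemM hhA⟩]; rw [hhx]
    have h2 : S ⟨h, hmemM hhA⟩ y = Vf y (h x') := hrep' ⟨h, hmemM hhA⟩
    have h3 : ‖h x'‖ < 1/2 := hhsm x' (by simp)
    have h4 : ‖Vf y (h x')‖ ≤ ‖h x'‖ := hVle _ _
    rw [← h2, h1, hn] at h4
    linarith
  -- existence of representation points
  have hexists : ∀ x ∈ strongBoundaryPoints (closure (A : Set C(X, E))), ∃ y : Y, Rep y x := by
    intro x hx
    have hcu₀ : ContinuousMap.const X u₀ ∈ M := hconstM u₀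
    have hcu₀norm : ‖ContinuousMap.const X u₀‖ = 1 := by
      refine le_antisymm ((ContinuousMap.norm_le _ zero_le_one).2 fun z => by
        simpa using hu₀.le) ?_
      calc (1 : ℝ) = ‖(ContinuousMap.const X u₀) x‖ := by simp [hu₀]
        _ ≤ _ := ContinuousMap.norm_coe_le_norm _ x
    -- the family of norm-one functions taking the value u₀ at x
    have hF : Nonempty {h : M // ‖(h : C(X, E))‖ = 1 ∧ (h : C(X, E)) x = u₀} :=
      ⟨⟨⟨_, hcu₀⟩, hcu₀norm, rfl⟩⟩
    have hY : Nonempty Y := by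
      by_contra hY
      rw [not_nonempty_iff] at hY
      have h0 : ‖S ⟨_, hcu₀⟩‖ = 1 := by rw [hSnorm]; exact hcu₀norm
      have h1 : ‖S ⟨_, hcu₀⟩‖ ≤ 0 :=
        (ContinuousMap.norm_le _ le_rfl).2 fun z => (hY.false z).elim
      rw [h0] at h1; linarith
    have hattain : ∀ g : C(Y, F), ∃ y, ‖g‖ = ‖g y‖ := by
      intro g
      obtain ⟨y, -, hy⟩ := isCompact_univ.exists_isMaxOn univ_nonempty
        ((map_continuous g).norm.continuousOn)
      exact ⟨y, le_antisymm ((ContinuousMap.norm_le _ (norm_nonneg _)).2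
        fun z => hy (mem_univ z)) (ContinuousMap.norm_coe_le_norm g y)⟩
    set K : {h : M // ‖(h : C(X, E))‖ = 1 ∧ (h : C(X, E)) x = u₀} → Set Y :=
      fun h => {y | ‖S h.1 y‖ = 1} with hK
    have hKcl : ∀ h, IsClosed (K h) :=
      fun h => isClosed_eq ((map_continuous (S h.1)).norm) continuous_const
    have hSle1 : ∀ (h : {h : M // ‖(h : C(X, E))‖ = 1 ∧ (h : C(X, E)) x = u₀}) (y : Y),
        ‖S h.1 y‖ ≤ 1 := by
      intro h y
      calc ‖S h.1 y‖ ≤ ‖S h.1‖ := ContinuousMap.norm_coe_le_norm _ y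
        _ = 1 := by rw [hSnorm]; exact h.2.1
    have hKne : ∀ h, (K h).Nonempty := by
      intro h
      obtain ⟨y, hy⟩ := hattain (S h.1)
      refine ⟨y, ?_⟩
      show ‖S h.1 y‖ = 1
      rw [← hy, hSnorm]; exact h.2.1
    -- midpoints stay in the family
    have hmid : ∀ h h' : {h : M // ‖(h : C(X, E))‖ = 1 ∧ (h : C(X, E)) x = u₀},
        ∃ m : {h : M // ‖(h : C(X, E))‖ = 1 ∧ (h : C(X, E)) x = u₀},
          m.1 = (2⁻¹ : ℝ) • (h.1 + h'.1) := by
      intro h h'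
      have happ : (((2⁻¹ : ℝ) • (h.1 + h'.1) : M) : C(X, E)) x = u₀ := by
        show (2⁻¹ : ℝ) • ((h.1 : C(X, E)) + (h'.1 : C(X, E))) x = u₀
        rw [ContinuousMap.add_apply, h.2.2, h'.2.2, ← two_smul ℝ u₀, smul_smul]
        norm_num
      have hnorm : ‖(((2⁻¹ : ℝ) • (h.1 + h'.1) : M) : C(X, E))‖ = 1 := by
        refine le_antisymm ?_ ?_
        · show ‖(2⁻¹ : ℝ) • ((h.1 : C(X, E)) + (h'.1 : C(X, E)))‖ ≤ 1
          rw [norm_smul]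
          have := norm_add_le (h.1 : C(X, E)) (h'.1 : C(X, E))
          rw [h.2.1, h'.2.1] at this
          calc ‖(2⁻¹ : ℝ)‖ * ‖(h.1 : C(X, E)) + (h'.1 : C(X, E))‖
              ≤ ‖(2⁻¹ : ℝ)‖ * 2 := by
                refine mul_le_mul_of_nonneg_left (by linarith) (norm_nonneg _)
            _ = 1 := by rw [Real.norm_eq_abs, abs_of_pos (by norm_num : (0:ℝ) < 2⁻¹)]; norm_num
        · calc (1 : ℝ) = ‖(((2⁻¹ : ℝ) • (h.1 + h'.1) : M) : C(X, E)) x‖ := by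
                rw [happ, hu₀]
            _ ≤ _ := ContinuousMap.norm_coe_le_norm _ x
      exact ⟨⟨(2⁻¹ : ℝ) • (h.1 + h'.1), hnorm, happ⟩, rfl⟩
    -- in the peak set of a midpoint, both halves attain norm one
    have hpair : ∀ (h h' m : {h : M // ‖(h : C(X, E))‖ = 1 ∧ (h : C(X, E)) x = u₀}),
        m.1 = (2⁻¹ : ℝ) • (h.1 + h'.1) → ∀ y ∈ K m, ‖S h.1 y + S h'.1 y‖ = 2 := by
      intro h h' m hm y hy
      have h1 : ‖S m.1 y‖ = 1 := hy
      have h2 : S m.1 y = (2⁻¹ : ℝ) • (S h.1 y + S h'.1 y) := by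
        rw [hm, map_smul, map_add]
        rfl
      rw [h2, norm_smul, Real.norm_eq_abs] at h1
      have : |(2⁻¹ : ℝ)| = 2⁻¹ := by norm_num
      rw [this] at h1
      linarith
    have hKsub : ∀ (h h' m : {h : M // ‖(h : C(X, E))‖ = 1 ∧ (h : C(X, E)) x = u₀}),
        m.1 = (2⁻¹ : ℝ) • (h.1 + h'.1) → K m ⊆ K h := by
      intro h h' m hm y hy
      have h2 := hpair h h' m hm y hy
      have h3 := hSle1 h y
      have h4 := hSle1 h' y
      have h5 := norm_add_le (S h.1 y) (S h'.1 y)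
      show ‖S h.1 y‖ = 1
      linarith
    have hdir : Directed (· ⊇ ·) K := by
      intro h h'
      obtain ⟨m, hm⟩ := hmid h h'
      exact ⟨m, hKsub h h' m hm, hKsub h' h m (by rw [hm, add_comm])⟩
    obtain ⟨y, hy⟩ := IsCompact.nonempty_iInter_of_directed_nonempty_isCompact_isClosed K
      hdir hKne (fun h => (hKcl h).isCompact) hKcl
    have hyK : ∀ h : {h : M // ‖(h : C(X, E))‖ = 1 ∧ (h : C(X, E)) x = u₀},
        ‖S h.1 y‖ = 1 := fun h => mem_iInter.1 hy h
    -- all members of the family have the same image at y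
    have heqF : ∀ h h' : {h : M // ‖(h : C(X, E))‖ = 1 ∧ (h : C(X, E)) x = u₀},
        S h.1 y = S h'.1 y := by
      intro h h'
      obtain ⟨m, hm⟩ := hmid h h'
      have h2 := hpair h h' m hm y (mem_iInter.1 hy m)
      refine eq_of_norm_eq_of_norm_add_eq (by rw [hyK h, hyK h']) ?_
      rw [h2, hyK h, hyK h']
      norm_num
    set cF : {h : M // ‖(h : C(X, E))‖ = 1 ∧ (h : C(X, E)) x = u₀} :=
      ⟨⟨_, hcu₀⟩, hcu₀norm, rfl⟩ with hcF
    have hw : Vf y u₀ = S cF.1 y := by rw [hVapp]; rfl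
    have hwn : ‖Vf y u₀‖ = 1 := by rw [hw]; exact hyK cF
    -- functions vanishing at x are killed at y
    have hzero : ∀ f : M, (f : C(X, E)) x = 0 → ‖(f : C(X, E))‖ ≤ 1 → S f y = 0 := by
      have key : ∀ f : M, (f : C(X, E)) x = 0 → ‖(f : C(X, E))‖ ≤ 1 →
          ‖S f y + (2 : ℝ) • Vf y u₀‖ ≤ 2 := by
        intro f hfx hf1
        refine le_of_forall_pos_le_add ?_
        intro ε hε
        have hU : {z | ‖(f : C(X, E)) z‖ < ε} ∈ nhds x := by
          have hopen : IsOpen {z | ‖(f : C(X, E)) z‖ < ε} :=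
            isOpen_lt (map_continuous (f : C(X, E))).norm continuous_const
          refine hopen.mem_nhds ?_
          show ‖(f : C(X, E)) x‖ < ε
          rw [hfx, norm_zero]; exact hε
        obtain ⟨h, hhA, hh1, hhx, hhsm⟩ := hx _ hU (1/2) one_half_pos u₀ hu₀
        set hMel : M := ⟨h, hmemM hhA⟩ with hhMel
        have hhF : S hMel y = Vf y u₀ := by
          rw [hw]
          exact heqF ⟨hMel, hh1, hhx⟩ cF
        have hbound : ‖(f : C(X, E)) + (2 : ℝ) • h‖ ≤ 2 + ε := by
          refine (ContinuousMap.norm_le _ (by linarith)).2 fun z => ?_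
          rw [ContinuousMap.add_apply, ContinuousMap.smul_apply]
          by_cases hz : ‖(f : C(X, E)) z‖ < ε
          · calc ‖(f : C(X, E)) z + (2 : ℝ) • h z‖
                ≤ ‖(f : C(X, E)) z‖ + ‖(2 : ℝ) • h z‖ := norm_add_le _ _
              _ ≤ ε + 2 * ‖h z‖ := by
                  rw [norm_smul, Real.norm_eq_abs]
                  refine add_le_add hz.le (by norm_num)
              _ ≤ ε + 2 * 1 := by
                  have : ‖h z‖ ≤ 1 := by
                    rw [← hh1]; exact ContinuousMap.norm_coe_le_norm _ z
                  linarith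
              _ ≤ 2 + ε := by linarith
          · have hz' : ‖h z‖ < 1/2 := hhsm z hz
            calc ‖(f : C(X, E)) z + (2 : ℝ) • h z‖
                ≤ ‖(f : C(X, E)) z‖ + ‖(2 : ℝ) • h z‖ := norm_add_le _ _
              _ ≤ 1 + 2 * ‖h z‖ := by
                  rw [norm_smul, Real.norm_eq_abs]
                  refine add_le_add ((ContinuousMap.norm_coe_le_norm _ z).trans hf1) (by norm_num)
              _ ≤ 2 + ε := by linarith
        have hexp : S (f + (2 : ℝ) • hMel) y = S f y + (2 : ℝ) • Vf y u₀ := by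
          rw [map_add, map_smul, ← hhF]
          rfl
        calc ‖S f y + (2 : ℝ) • Vf y u₀‖ = ‖S (f + (2 : ℝ) • hMel) y‖ := by rw [hexp]
          _ ≤ ‖S (f + (2 : ℝ) • hMel)‖ := ContinuousMap.norm_coe_le_norm _ y
          _ = ‖((f + (2 : ℝ) • hMel : M) : C(X, E))‖ := hSnorm _
          _ ≤ 2 + ε := hbound
      intro f hfx hf1
      have h1 := key f hfx hf1
      have h2 := key (-f) (by show -((f : C(X, E)) x) = 0; rw [hfx, neg_zero])
        (by show ‖-(f : C(X, E))‖ ≤ 1; rwa [norm_neg])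
      have hSneg : S (-f) y = -(S f y) := by rw [map_neg]; rfl
      rw [hSneg] at h2
      have hab : (S f y + (2 : ℝ) • Vf y u₀) + (-(S f y) + (2 : ℝ) • Vf y u₀)
          = (4 : ℝ) • Vf y u₀ := by
        have : (2 : ℝ) • Vf y u₀ + (2 : ℝ) • Vf y u₀ = (4 : ℝ) • Vf y u₀ := by
          rw [← add_smul]; norm_num
        rw [← this]; abel
      have hnorm4 : ‖(S f y + (2 : ℝ) • Vf y u₀) + (-(S f y) + (2 : ℝ) • Vf y u₀)‖ = 4 := by
        rw [hab, norm_smul, Real.norm_eq_abs, hwn]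
        norm_num
      have hna : ‖S f y + (2 : ℝ) • Vf y u₀‖ = 2 := by
        have h5 := norm_add_le (S f y + (2 : ℝ) • Vf y u₀) (-(S f y) + (2 : ℝ) • Vf y u₀)
        rw [hnorm4] at h5
        linarith
      have hnb : ‖-(S f y) + (2 : ℝ) • Vf y u₀‖ = 2 := by
        have h5 := norm_add_le (S f y + (2 : ℝ) • Vf y u₀) (-(S f y) + (2 : ℝ) • Vf y u₀)
        rw [hnorm4] at h5
        linarith
      have heq := eq_of_norm_eq_of_norm_add_eq (hna.trans hnb.symm)
        (by rw [hnorm4, hna, hnb]; norm_num)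
      have h6 : S f y = -(S f y) := by
        have := add_right_cancel heq
        exact this
      have h7 : (2 : ℝ) • S f y = 0 := by
        rw [two_smul]
        nth_rewrite 2 [h6]
        abel
      have := smul_eq_zero.1 h7
      rcases this with h | h
      · norm_num at h
      · exact h
    -- the full representation at y
    have hrepall : ∀ f : M, S f y = Vf y ((f : C(X, E)) x) := by
      intro f
      set g : M := f - cM ((f : C(X, E)) x) with hg
      have hgx : (g : C(X, E)) x = 0 := by
        show ((f : C(X, E)) - ContinuousMap.const X ((f : C(X, E)) x)) x = 0
        rw [ContinuousMap.sub_apply]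
        simp
      have hgz : S g y = 0 := by
        by_cases h0 : (g : C(X, E)) = 0
        · have : g = 0 := Subtype.ext h0
          rw [this, map_zero]
          rfl
        · have hgn : (0 : ℝ) < ‖(g : C(X, E))‖ := norm_pos_iff.2 h0
          have h1 : S (‖(g : C(X, E))‖⁻¹ • g) y = 0 := by
            refine hzero _ ?_ ?_
            · show (‖(g : C(X, E))‖⁻¹ • (g : C(X, E))) x = 0
              rw [ContinuousMap.smul_apply, hgx, smul_zero]
            · show ‖‖(g : C(X, E))‖⁻¹ • (g : C(X, E))‖ ≤ 1
              rw [norm_smul, Real.norm_eq_abs, abs_of_pos (by positivity)]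
              rw [inv_mul_cancel₀ hgn.ne']
          rw [map_smul] at h1
          have h2 : (‖(g : C(X, E))‖⁻¹ • (S g)) y = ‖(g : C(X, E))‖⁻¹ • (S g y) := rfl
          rw [h2] at h1
          have := smul_eq_zero.1 h1
          rcases this with h | h
          · exfalso; have := inv_ne_zero hgn.ne'; exact this h
          · exact h
      have hdecomp : S f = S g + S (cM ((f : C(X, E)) x)) := by
        rw [hg, map_sub]
        abel
      have : S f y = S g y + S (cM ((f : C(X, E)) x)) y := by
        rw [hdecomp]; rfl
      rw [this, hgz, zero_add, hVapp]
    exact ⟨y, hx, hrepall, hwn⟩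
  -- assemble the data
  set Y₀ : Set Y := {y | ∃ x, Rep y x} with hY₀
  have hY₀mem : ∀ y : Y₀, ∃ x, Rep y.1 x := fun y => y.2
  set Φ : Y₀ → X := fun y => (hY₀mem y).choose with hΦ
  have hΦspec : ∀ y : Y₀, Rep y.1 (Φ y) := fun y => (hY₀mem y).choose_spec
  refine ⟨Y₀, Φ, fun y => Vf y.1, ?_, ?_, ?_, ?_, ?_, ?_⟩
  · -- continuity of Φ
    rw [continuous_iff_continuousAt]
    intro y
    intro U hU
    obtain ⟨hxΘ, hrep, hn⟩ := hΦspec y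
    obtain ⟨h, hhA, hh1, hhx, hhsm⟩ := hxΘ U hU (1/2) one_half_pos u₀ hu₀
    set g : C(Y, F) := S ⟨h, hmemM hhA⟩ with hg
    have hgy : ‖g y.1‖ = 1 := by
      rw [hg]
      have := hrep ⟨h, hmemM hhA⟩
      rw [this]
      show ‖Vf y.1 (h (Φ y))‖ = 1
      rw [hhx, hn]
    have hW : IsOpen {z : Y | 1/2 < ‖g z‖} :=
      isOpen_lt continuous_const (map_continuous g).norm
    have hyW : y.1 ∈ {z : Y | 1/2 < ‖g z‖} := by
      show (1:ℝ)/2 < ‖g y.1‖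
      rw [hgy]; norm_num
    rw [Filter.mem_map]
    refine Filter.mem_of_superset ((hW.preimage continuous_subtype_val).mem_nhds hyW) ?_
    intro y' hy'
    have hy'W : (1:ℝ)/2 < ‖g y'.1‖ := hy'
    show Φ y' ∈ U
    by_contra hnotU
    obtain ⟨-, hrep', -⟩ := hΦspec y'
    have h1 : g y'.1 = Vf y'.1 (h (Φ y')) := hrep' ⟨h, hmemM hhA⟩
    have h2 : ‖g y'.1‖ ≤ ‖h (Φ y')‖ := h1 ▸ hVle _ _
    have h3 := hhsm (Φ y') hnotU
    linarith
  · exact fun y => (hΦspec y).1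
  · -- surjectivity onto the strong boundary points
    intro x hx
    obtain ⟨y, hy⟩ := hexists x hx
    refine ⟨⟨y, ⟨x, hy⟩⟩, ?_⟩
    exact huniq y _ x (hΦspec ⟨y, ⟨x, hy⟩⟩) hy
  · -- norm one
    intro y
    obtain ⟨-, -, hn⟩ := hΦspec y
    refine le_antisymm (ContinuousLinearMap.opNorm_le_bound _ zero_le_one
      fun u => by rw [one_mul]; exact hVle _ u) ?_
    calc (1 : ℝ) = ‖Vf y.1 u₀‖ := hn.symm
      _ ≤ ‖Vf y.1‖ * ‖u₀‖ := ContinuousLinearMap.le_opNorm _ _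
      _ = ‖Vf y.1‖ := by rw [hu₀, mul_one]
  · -- the representation
    intro f hf y
    obtain ⟨-, hrep, -⟩ := hΦspec y
    have hfM : f ∈ M := hle hf
    have h1 : S ⟨f, hfM⟩ y.1 = Vf y.1 (f (Φ y)) := hrep ⟨f, hfM⟩
    have h2 : S ⟨f, hfM⟩ = T f - T 0 := hSι ⟨f, hf⟩
    rw [h2] at h1
    rw [ContinuousMap.sub_apply] at h1
    rw [← h1]
    abel
  · -- strong continuity of V
    intro u
    exact (map_continuous (S (cM u))).comp continuous_subtype_val
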